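/- arXiv:1604.05064 — 4 statements merged into one kernel-verified Lean document; each statement's English description precedes it below -/
import Mathlib

section
/- Let ρ > 0, q = (q₁, q₂) ∈ ℝ² with d := ‖q‖ ≥ 2ρ, L(θ) = √(d² − 2ρ(q₁ sin θ − q₂ cos θ)), φ(θ) = atan2(q₂ + ρ cos θ, q₁ − ρ sin θ) − arctan(ρ / L(θ)), and D(θ) = ρ(θ − φ(θ)) + L(θ). Then on any open interval of headings θ on which L(θ) > 0 and θ − φ(θ) ∈ (0, 2π), the function D is differentiable and D′(θ) = ρ(1 − cos(θ − φ(θ))). In particular 0 ≤ D′(θ) ≤ 2ρ on such an interval. -/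
/-- Four-quadrant arctangent: `atan2 y x` is the argument of the complex number `x + y i`. -/
noncomputable def atan2 (y x : ℝ) : ℝ := Complex.arg ⟨x, y⟩

/-- Tangent-segment length of the RS Dubins path from the origin with heading `θ`
to the target `q = (q₁, q₂)`: `L(θ) = √(‖q‖² − 2ρ(q₁ sin θ − q₂ cos θ))`. -/
noncomputable def Lrs (ρ q₁ q₂ θ : ℝ) : ℝ :=
  Real.sqrt (Real.sqrt (q₁ ^ 2 + q₂ ^ 2) ^ 2 - 2 * ρ * (q₁ * Real.sin θ - q₂ * Real.cos θ))

/-- Heading along the straight segment of the RS Dubins path: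
`φ(θ) = atan2(q₂ + ρ cos θ, q₁ − ρ sin θ) − arctan(ρ / L(θ))`. -/
noncomputable def φrs (ρ q₁ q₂ θ : ℝ) : ℝ :=
  atan2 (q₂ + ρ * Real.cos θ) (q₁ - ρ * Real.sin θ) - Real.arctan (ρ / Lrs ρ q₁ q₂ θ)

/-- Total RS Dubins path length `D(θ) = ρ(θ − φ(θ)) + L(θ)`. -/
noncomputable def Drs (ρ q₁ q₂ θ : ℝ) : ℝ :=
  ρ * (θ - φrs ρ q₁ q₂ θ) + Lrs ρ q₁ q₂ θ

/-- Half-angle representation of an angle in `(0, 2π)` via `arctan`. -/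
lemma half_angle {τ : ℝ} (h0 : 0 < τ) (h2 : τ < 2 * Real.pi) :
    Real.pi - 2 * Real.arctan (Real.sin τ / (1 - Real.cos τ)) = τ := by
  have hπ := Real.pi_pos
  have hs : 0 < Real.sin (τ / 2) :=
    Real.sin_pos_of_pos_of_lt_pi (by linarith) (by linarith)
  have hsin : Real.sin τ = 2 * Real.sin (τ / 2) * Real.cos (τ / 2) := by
    have h := Real.sin_two_mul (τ / 2)
    rw [show (2:ℝ) * (τ / 2) = τ by ring] at h
    exact h
  have hcos : 1 - Real.cos τ = 2 * Real.sin (τ / 2) ^ 2 := by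
    have h := Real.sin_sq_eq_half_sub (τ / 2)
    rw [show (2:ℝ) * (τ / 2) = τ by ring] at h
    linarith
  have hq : Real.sin τ / (1 - Real.cos τ) = Real.cos (τ / 2) / Real.sin (τ / 2) := by
    rw [hsin, hcos]
    field_simp
  have ht : Real.tan (Real.pi / 2 - τ / 2) = Real.cos (τ / 2) / Real.sin (τ / 2) := by
    rw [Real.tan_pi_div_two_sub, Real.tan_eq_sin_div_cos, inv_div]
  have harc : Real.arctan (Real.cos (τ / 2) / Real.sin (τ / 2)) = Real.pi / 2 - τ / 2 := by
    rw [← ht, Real.arctan_tan (by linarith) (by linarith)]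
  rw [hq, harc]; ring

/-- The squared tangent length, without the nested square roots. -/
lemma Lrs_sq {ρ q₁ q₂ θ : ℝ} (h : 0 < Lrs ρ q₁ q₂ θ) :
    Lrs ρ q₁ q₂ θ ^ 2 = q₁ ^ 2 + q₂ ^ 2 - 2 * ρ * (q₁ * Real.sin θ - q₂ * Real.cos θ) := by
  have h1 : Real.sqrt (q₁ ^ 2 + q₂ ^ 2) ^ 2 = q₁ ^ 2 + q₂ ^ 2 :=
    Real.sq_sqrt (by positivity)
  rw [Lrs, h1] at h ⊢
  exact Real.sq_sqrt (le_of_lt (Real.sqrt_pos.mp h))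

/-- `Lrs` as a plain square root. -/
lemma Lrs_eq (ρ q₁ q₂ : ℝ) :
    Lrs ρ q₁ q₂ = fun θ =>
      Real.sqrt (q₁ ^ 2 + q₂ ^ 2 - 2 * ρ * (q₁ * Real.sin θ - q₂ * Real.cos θ)) := by
  funext θ
  rw [Lrs, Real.sq_sqrt (by positivity : (0:ℝ) ≤ q₁ ^ 2 + q₂ ^ 2)]

/-- Explicit formulas for the cosine and sine of the turning angle `θ − φ(θ)`. -/
lemma cos_sin_tau (ρ q₁ q₂ θ : ℝ) (hρ : 0 < ρ) (hL : 0 < Lrs ρ q₁ q₂ θ) :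
    Real.cos (θ - φrs ρ q₁ q₂ θ) =
      (Lrs ρ q₁ q₂ θ * (q₁ * Real.cos θ + q₂ * Real.sin θ)
        + ρ * (ρ - (q₁ * Real.sin θ - q₂ * Real.cos θ))) / (Lrs ρ q₁ q₂ θ ^ 2 + ρ ^ 2)
    ∧ Real.sin (θ - φrs ρ q₁ q₂ θ) =
      (Lrs ρ q₁ q₂ θ * ((q₁ * Real.sin θ - q₂ * Real.cos θ) - ρ)
        + ρ * (q₁ * Real.cos θ + q₂ * Real.sin θ)) / (Lrs ρ q₁ q₂ θ ^ 2 + ρ ^ 2) := by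
  have pyth := Real.sin_sq_add_cos_sq θ
  set ℓ := Lrs ρ q₁ q₂ θ with hℓdef
  have hℓ2 : ℓ ^ 2 = q₁ ^ 2 + q₂ ^ 2 - 2 * ρ * (q₁ * Real.sin θ - q₂ * Real.cos θ) :=
    Lrs_sq hL
  have hc : (q₁ - ρ * Real.sin θ) ^ 2 + (q₂ + ρ * Real.cos θ) ^ 2 = ℓ ^ 2 + ρ ^ 2 := by
    linear_combination ρ ^ 2 * pyth - hℓ2
  set w := Real.sqrt (ℓ ^ 2 + ρ ^ 2) with hwdef
  have hwpos : 0 < w := Real.sqrt_pos.mpr (by positivity)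
  have hw : w ^ 2 = ℓ ^ 2 + ρ ^ 2 := Real.sq_sqrt (by positivity)
  set z : ℂ := ⟨q₁ - ρ * Real.sin θ, q₂ + ρ * Real.cos θ⟩ with hzdef
  have hzabs : ‖z‖ = w := by
    rw [Complex.norm_def, hzdef, Complex.normSq_mk, hwdef]
    congr 1
    linear_combination hc
  have hzne : z ≠ 0 := by
    intro h
    rw [h, norm_zero] at hzabs
    exact absurd hzabs.symm (ne_of_gt hwpos)
  have hcosarg : Real.cos (Complex.arg z) = (q₁ - ρ * Real.sin θ) / w := by
    rw [Complex.cos_arg hzne, hzabs]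
  have hsinarg : Real.sin (Complex.arg z) = (q₂ + ρ * Real.cos θ) / w := by
    rw [Complex.sin_arg, hzabs]
  have hℓpos : 0 < ℓ := hL
  have h1x : Real.sqrt (1 + (ρ / ℓ) ^ 2) = w / ℓ := by
    rw [show 1 + (ρ / ℓ) ^ 2 = (ℓ ^ 2 + ρ ^ 2) / ℓ ^ 2 by field_simp,
      Real.sqrt_div (by positivity) _, Real.sqrt_sq hℓpos.le]
  have hcosA : Real.cos (Real.arctan (ρ / ℓ)) = ℓ / w := by
    rw [Real.cos_arctan, h1x, one_div_div]
  have hsinA : Real.sin (Real.arctan (ρ / ℓ)) = ρ / w := by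
    rw [Real.sin_arctan, h1x]
    field_simp
  have hφ : φrs ρ q₁ q₂ θ = Complex.arg z - Real.arctan (ρ / ℓ) := rfl
  have hww : w * w = ℓ ^ 2 + ρ ^ 2 := by rw [← sq]; exact hw
  have hcosφ : Real.cos (φrs ρ q₁ q₂ θ)
      = ((q₁ - ρ * Real.sin θ) * ℓ + (q₂ + ρ * Real.cos θ) * ρ) / (ℓ ^ 2 + ρ ^ 2) := by
    rw [hφ, Real.cos_sub, hcosarg, hsinarg, hcosA, hsinA, div_mul_div_comm,
      div_mul_div_comm, ← add_div, hww]
  have hsinφ : Real.sin (φrs ρ q₁ q₂ θ)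
      = ((q₂ + ρ * Real.cos θ) * ℓ - (q₁ - ρ * Real.sin θ) * ρ) / (ℓ ^ 2 + ρ ^ 2) := by
    rw [hφ, Real.sin_sub, hcosarg, hsinarg, hcosA, hsinA, div_mul_div_comm,
      div_mul_div_comm, div_sub_div_same, hww]
  constructor
  · rw [Real.cos_sub, hcosφ, hsinφ, ← mul_div_assoc, ← mul_div_assoc, ← add_div]
    congr 1
    linear_combination ρ ^ 2 * pyth
  · rw [Real.sin_sub, hcosφ, hsinφ, ← mul_div_assoc, ← mul_div_assoc, div_sub_div_same]
    congr 1
    linear_combination -(ℓ * ρ) * pyth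

theorem stmt1 (ρ q₁ q₂ a b : ℝ) (hρ : 0 < ρ)
    (hd : 2 * ρ ≤ Real.sqrt (q₁ ^ 2 + q₂ ^ 2))
    (hL : ∀ θ ∈ Set.Ioo a b, 0 < Lrs ρ q₁ q₂ θ)
    (hτ : ∀ θ ∈ Set.Ioo a b, θ - φrs ρ q₁ q₂ θ ∈ Set.Ioo 0 (2 * Real.pi)) :
    ∀ θ ∈ Set.Ioo a b,
      HasDerivAt (Drs ρ q₁ q₂) (ρ * (1 - Real.cos (θ - φrs ρ q₁ q₂ θ))) θ
      ∧ 0 ≤ ρ * (1 - Real.cos (θ - φrs ρ q₁ q₂ θ))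
      ∧ ρ * (1 - Real.cos (θ - φrs ρ q₁ q₂ θ)) ≤ 2 * ρ := by
  intro θ₀ hθ₀
  obtain ⟨hτ0, hτ2⟩ := hτ θ₀ hθ₀
  have hLθ := hL θ₀ hθ₀
  obtain ⟨hCeq, hSeq⟩ := cos_sin_tau ρ q₁ q₂ θ₀ hρ hLθ
  have pyth := Real.sin_sq_add_cos_sq θ₀
  set ℓ := Lrs ρ q₁ q₂ θ₀ with hℓdef
  have hℓpos : 0 < ℓ := hLθ
  have hℓ2 := Lrs_sq hLθ
  set u₀ := q₁ * Real.cos θ₀ + q₂ * Real.sin θ₀ with hu₀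
  set v₀ := q₁ * Real.sin θ₀ - q₂ * Real.cos θ₀ with hv₀
  have hrel : ℓ ^ 2 = u₀ ^ 2 + v₀ ^ 2 - 2 * ρ * v₀ := by
    rw [hℓ2, hu₀, hv₀]
    linear_combination (-(q₁ ^ 2 + q₂ ^ 2)) * pyth
  set W₀ := ℓ ^ 2 + ρ ^ 2 with hW₀
  have hWpos : 0 < W₀ := by rw [hW₀]; positivity
  set C₀ := (ℓ * u₀ + ρ * (ρ - v₀)) / W₀ with hC₀
  set S₀ := (ℓ * (v₀ - ρ) + ρ * u₀) / W₀ with hS₀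
  have hpy : S₀ ^ 2 + C₀ ^ 2 = 1 := by
    rw [← hCeq, ← hSeq]; exact Real.sin_sq_add_cos_sq _
  have hCne : C₀ ≠ 1 := by
    rw [← hCeq]
    intro h
    have := (Real.cos_eq_one_iff_of_lt_of_lt (by linarith) (by linarith)).mp h
    linarith
  have hCle : C₀ ≤ 1 := by rw [← hCeq]; exact Real.cos_le_one _
  have h1C : 0 < 1 - C₀ := by
    rcases lt_of_le_of_ne hCle hCne with h; linarith
  have h1Cne : (1:ℝ) - C₀ ≠ 0 := ne_of_gt h1C
  have hCge : -1 ≤ C₀ := by rw [← hCeq]; exact Real.neg_one_le_cos _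
  -- basic derivatives
  have hu' : HasDerivAt (fun θ => q₁ * Real.cos θ + q₂ * Real.sin θ) (-v₀) θ₀ := by
    have h := ((Real.hasDerivAt_cos θ₀).const_mul q₁).add ((Real.hasDerivAt_sin θ₀).const_mul q₂)
    refine h.congr_deriv (Eq.symm ?_)
    rw [hv₀]; ring
  have hv' : HasDerivAt (fun θ => q₁ * Real.sin θ - q₂ * Real.cos θ) u₀ θ₀ := by
    have h := ((Real.hasDerivAt_sin θ₀).const_mul q₁).sub ((Real.hasDerivAt_cos θ₀).const_mul q₂)
    refine h.congr_deriv (Eq.symm ?_)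
    rw [hu₀]; ring
  have hP' : HasDerivAt (fun θ => q₁ ^ 2 + q₂ ^ 2 - 2 * ρ * (q₁ * Real.sin θ - q₂ * Real.cos θ))
      (-(2 * ρ * u₀)) θ₀ := by
    have h := (hv'.const_mul (2 * ρ)).const_sub (q₁ ^ 2 + q₂ ^ 2)
    convert h using 1
  have hPpos : 0 < q₁ ^ 2 + q₂ ^ 2 - 2 * ρ * (q₁ * Real.sin θ₀ - q₂ * Real.cos θ₀) := by
    rw [← hv₀, ← hℓ2]; positivity
  have hℓval : ℓ = Real.sqrt (q₁ ^ 2 + q₂ ^ 2 - 2 * ρ * (q₁ * Real.sin θ₀ - q₂ * Real.cos θ₀)) := by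
    rw [hℓdef, Lrs_eq]
  have hL' : HasDerivAt (Lrs ρ q₁ q₂) (-(ρ * u₀) / ℓ) θ₀ := by
    rw [Lrs_eq]
    have h := hP'.sqrt (ne_of_gt hPpos)
    convert h using 1
    rw [hℓval]; ring
  have hW' : HasDerivAt (fun θ => Lrs ρ q₁ q₂ θ ^ 2 + ρ ^ 2) (-(2 * ρ * u₀)) θ₀ := by
    have h := (hL'.pow 2).add_const (ρ ^ 2)
    refine h.congr_deriv (Eq.symm ?_)
    push_cast
    field_simp
    ring
  have hCnum' : HasDerivAt (fun θ => Lrs ρ q₁ q₂ θ * (q₁ * Real.cos θ + q₂ * Real.sin θ)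
      + ρ * (ρ - (q₁ * Real.sin θ - q₂ * Real.cos θ)))
      ((-(ρ * u₀) / ℓ * u₀ + ℓ * -v₀) + ρ * -u₀) θ₀ :=
    (hL'.mul hu').add ((hv'.const_sub ρ).const_mul ρ)
  have hSnum' : HasDerivAt (fun θ => Lrs ρ q₁ q₂ θ * (q₁ * Real.sin θ - q₂ * Real.cos θ - ρ)
      + ρ * (q₁ * Real.cos θ + q₂ * Real.sin θ))
      ((-(ρ * u₀) / ℓ * (v₀ - ρ) + ℓ * u₀) + ρ * -v₀) θ₀ :=
    (hL'.mul (hv'.sub_const ρ)).add (hu'.const_mul ρ)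
  have hWne : Lrs ρ q₁ q₂ θ₀ ^ 2 + ρ ^ 2 ≠ 0 := by positivity
  have hC' : HasDerivAt (fun θ => (Lrs ρ q₁ q₂ θ * (q₁ * Real.cos θ + q₂ * Real.sin θ) + ρ * (ρ - (q₁ * Real.sin θ - q₂ * Real.cos θ))) / (Lrs ρ q₁ q₂ θ ^ 2 + ρ ^ 2))
      (-((1 - C₀ + u₀ / ℓ) * S₀)) θ₀ := by
    have h := hCnum'.div hW' hWne
    refine h.congr_deriv (Eq.symm ?_)
    rw [← hℓdef, ← hu₀, ← hv₀, hC₀, hS₀, hW₀]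
    field_simp
    linear_combination (ℓ ^ 2 * ρ) * hrel
  have hS' : HasDerivAt (fun θ => (Lrs ρ q₁ q₂ θ * (q₁ * Real.sin θ - q₂ * Real.cos θ - ρ) + ρ * (q₁ * Real.cos θ + q₂ * Real.sin θ)) / (Lrs ρ q₁ q₂ θ ^ 2 + ρ ^ 2))
      ((1 - C₀ + u₀ / ℓ) * C₀) θ₀ := by
    have h := hSnum'.div hW' hWne
    refine h.congr_deriv (Eq.symm ?_)
    rw [← hℓdef, ← hu₀, ← hv₀, hC₀, hW₀]
    field_simp
    linear_combination (ℓ * ρ ^ 2) * hrel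
  have hgne : 1 - (Lrs ρ q₁ q₂ θ₀ * (q₁ * Real.cos θ₀ + q₂ * Real.sin θ₀) + ρ * (ρ - (q₁ * Real.sin θ₀ - q₂ * Real.cos θ₀))) / (Lrs ρ q₁ q₂ θ₀ ^ 2 + ρ ^ 2) ≠ 0 := by
    rw [← hℓdef, ← hu₀, ← hv₀, ← hW₀, ← hC₀]
    exact h1Cne
  have hN' : HasDerivAt (fun θ => (Lrs ρ q₁ q₂ θ * (q₁ * Real.sin θ - q₂ * Real.cos θ - ρ) + ρ * (q₁ * Real.cos θ + q₂ * Real.sin θ)) / (Lrs ρ q₁ q₂ θ ^ 2 + ρ ^ 2) / (1 - (Lrs ρ q₁ q₂ θ * (q₁ * Real.cos θ + q₂ * Real.sin θ) + ρ * (ρ - (q₁ * Real.sin θ - q₂ * Real.cos θ))) / (Lrs ρ q₁ q₂ θ ^ 2 + ρ ^ 2)))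
      (-((1 - C₀ + u₀ / ℓ) / (1 - C₀))) θ₀ := by
    have h := hS'.div (hC'.const_sub 1) hgne
    have h2 : HasDerivAt (fun θ => (Lrs ρ q₁ q₂ θ * (q₁ * Real.sin θ - q₂ * Real.cos θ - ρ) + ρ * (q₁ * Real.cos θ + q₂ * Real.sin θ)) / (Lrs ρ q₁ q₂ θ ^ 2 + ρ ^ 2) / (1 - (Lrs ρ q₁ q₂ θ * (q₁ * Real.cos θ + q₂ * Real.sin θ) + ρ * (ρ - (q₁ * Real.sin θ - q₂ * Real.cos θ))) / (Lrs ρ q₁ q₂ θ ^ 2 + ρ ^ 2)))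
        (((1 - C₀ + u₀ / ℓ) * C₀ * (1 - C₀) -
          S₀ * -(-((1 - C₀ + u₀ / ℓ) * S₀))) / (1 - C₀) ^ 2) θ₀ := by
      refine h.congr_deriv (Eq.symm ?_); rw [← hℓdef, ← hu₀, ← hv₀, ← hW₀, ← hC₀, ← hS₀]
    refine h2.congr_deriv (Eq.symm ?_)
    field_simp
    linear_combination ((1 - C₀) * ℓ + u₀) * hpy
  have harct := (Real.hasDerivAt_arctan (S₀ / (1 - C₀))).comp θ₀ hN'
  clear_value C₀ S₀
  have h1N : 1 + (S₀ / (1 - C₀)) ^ 2 = 2 / (1 - C₀) := by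
    field_simp
    linear_combination hpy
  have hGder : HasDerivAt (fun θ => Real.pi - 2 * Real.arctan ((Lrs ρ q₁ q₂ θ * (q₁ * Real.sin θ - q₂ * Real.cos θ - ρ) + ρ * (q₁ * Real.cos θ + q₂ * Real.sin θ)) / (Lrs ρ q₁ q₂ θ ^ 2 + ρ ^ 2) / (1 - (Lrs ρ q₁ q₂ θ * (q₁ * Real.cos θ + q₂ * Real.sin θ) + ρ * (ρ - (q₁ * Real.sin θ - q₂ * Real.cos θ))) / (Lrs ρ q₁ q₂ θ ^ 2 + ρ ^ 2))))
      (1 - C₀ + u₀ / ℓ) θ₀ := by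
    have h := (harct.const_mul 2).const_sub Real.pi
    refine h.congr_deriv (Eq.symm ?_)
    rw [h1N, one_div_div]
    field_simp [h1Cne, hℓpos.ne']
  have hF' : HasDerivAt (fun θ => ρ * (Real.pi - 2 * Real.arctan ((Lrs ρ q₁ q₂ θ * (q₁ * Real.sin θ - q₂ * Real.cos θ - ρ) + ρ * (q₁ * Real.cos θ + q₂ * Real.sin θ)) / (Lrs ρ q₁ q₂ θ ^ 2 + ρ ^ 2) / (1 - (Lrs ρ q₁ q₂ θ * (q₁ * Real.cos θ + q₂ * Real.sin θ) + ρ * (ρ - (q₁ * Real.sin θ - q₂ * Real.cos θ))) / (Lrs ρ q₁ q₂ θ ^ 2 + ρ ^ 2)))) + Lrs ρ q₁ q₂ θ)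
      (ρ * (1 - C₀)) θ₀ := by
    have h := (hGder.const_mul ρ).add hL'
    refine h.congr_deriv (Eq.symm ?_)
    field_simp
    ring
  have hev : Drs ρ q₁ q₂ =ᶠ[nhds θ₀]
      (fun θ => ρ * (Real.pi - 2 * Real.arctan ((Lrs ρ q₁ q₂ θ * (q₁ * Real.sin θ - q₂ * Real.cos θ - ρ) + ρ * (q₁ * Real.cos θ + q₂ * Real.sin θ)) / (Lrs ρ q₁ q₂ θ ^ 2 + ρ ^ 2) / (1 - (Lrs ρ q₁ q₂ θ * (q₁ * Real.cos θ + q₂ * Real.sin θ) + ρ * (ρ - (q₁ * Real.sin θ - q₂ * Real.cos θ))) / (Lrs ρ q₁ q₂ θ ^ 2 + ρ ^ 2)))) + Lrs ρ q₁ q₂ θ) := by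
    filter_upwards [Ioo_mem_nhds hθ₀.1 hθ₀.2] with x hx
    obtain ⟨hCx, hSx⟩ := cos_sin_tau ρ q₁ q₂ x hρ (hL x hx)
    have hh := half_angle (hτ x hx).1 (hτ x hx).2
    rw [hCx, hSx] at hh
    simp only [Drs]
    rw [← hh]
  refine ⟨?_, ?_, ?_⟩
  · rw [hCeq]
    exact hF'.congr_of_eventuallyEq hev
  · rw [hCeq]
    have := mul_nonneg hρ.le (by linarith : (0:ℝ) ≤ 1 - C₀)
    linarith
  · rw [hCeq]
    have := mul_nonneg hρ.le (by linarith : (0:ℝ) ≤ 1 + C₀)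
    linarith
end

section
/- Let ρ > 0, q = (q₁, q₂) ∈ ℝ² with d := ‖q‖ ≥ 2ρ, β the polar angle of q (so q = d(cos β, sin β)), L(θ) = √(d² − 2ρ(q₁ sin θ − q₂ cos θ)), and φ(θ) = atan2(q₂ + ρ cos θ, q₁ − ρ sin θ) − arctan(ρ / L(θ)). Then for every θ with L(θ) > 0, one has the identity d · sin(β − φ(θ)) = ρ(1 − cos(θ − φ(θ))). -/
/- STATEMENT 2: with β the polar angle of q (q = d(cos β, sin β), d = ‖q‖ ≥ 2ρ),
for every θ with L(θ) > 0 one has d · sin(β − φ(θ)) = ρ(1 − cos(θ − φ(θ))). -/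
theorem stmt2 (ρ q₁ q₂ β : ℝ) (hρ : 0 < ρ)
    (hd : 2 * ρ ≤ Real.sqrt (q₁ ^ 2 + q₂ ^ 2))
    (hβ₁ : q₁ = Real.sqrt (q₁ ^ 2 + q₂ ^ 2) * Real.cos β)
    (hβ₂ : q₂ = Real.sqrt (q₁ ^ 2 + q₂ ^ 2) * Real.sin β) :
    ∀ θ : ℝ, 0 < Lrs ρ q₁ q₂ θ →
      Real.sqrt (q₁ ^ 2 + q₂ ^ 2) * Real.sin (β - φrs ρ q₁ q₂ θ)
        = ρ * (1 - Real.cos (θ - φrs ρ q₁ q₂ θ)) := by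
  intro θ hL
  have hq : (0:ℝ) ≤ q₁ ^ 2 + q₂ ^ 2 := by positivity
  set d := Real.sqrt (q₁ ^ 2 + q₂ ^ 2) with hdd
  have hd2 : d ^ 2 = q₁ ^ 2 + q₂ ^ 2 := Real.sq_sqrt hq
  have hdpos : 0 < d := lt_of_lt_of_le (by linarith) hd
  set L := Lrs ρ q₁ q₂ θ with hLdef
  have hrad : L ^ 2 = d ^ 2 - 2 * ρ * (q₁ * Real.sin θ - q₂ * Real.cos θ) := by
    rw [hLdef]
    exact Real.sq_sqrt (le_of_lt (Real.sqrt_pos.mp hL))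
  set A := q₂ + ρ * Real.cos θ with hA
  set B := q₁ - ρ * Real.sin θ with hB
  have hAB : B ^ 2 + A ^ 2 = L ^ 2 + ρ ^ 2 := by
    rw [hrad, hd2, hA, hB]
    linear_combination ρ ^ 2 * Real.sin_sq_add_cos_sq θ
  set s := Real.sqrt (L ^ 2 + ρ ^ 2) with hsdef
  have hspos : 0 < s := Real.sqrt_pos.mpr (by positivity)
  have hs2 : s ^ 2 = L ^ 2 + ρ ^ 2 := Real.sq_sqrt (by positivity)
  have habs : ‖(⟨B, A⟩ : ℂ)‖ = s := by
    rw [Complex.norm_def, Complex.normSq_mk,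
      show B * B + A * A = L ^ 2 + ρ ^ 2 by linear_combination hAB]
  have hz : (⟨B, A⟩ : ℂ) ≠ 0 := by
    intro h
    rw [h] at habs
    simp at habs
    exact hspos.ne' habs.symm
  have hcosα : Real.cos (atan2 A B) = B / s := by
    unfold atan2
    rw [Complex.cos_arg hz, habs]
  have hsinα : Real.sin (atan2 A B) = A / s := by
    unfold atan2
    rw [Complex.sin_arg, habs]
  have hsq : Real.sqrt (1 + (ρ / L) ^ 2) = s / L := by
    rw [show (1:ℝ) + (ρ / L) ^ 2 = (L ^ 2 + ρ ^ 2) / L ^ 2 by field_simp,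
      Real.sqrt_div (by positivity), Real.sqrt_sq hL.le]
  have hcosγ : Real.cos (Real.arctan (ρ / L)) = L / s := by
    rw [Real.cos_arctan, hsq]
    field_simp
  have hsinγ : Real.sin (Real.arctan (ρ / L)) = ρ / s := by
    rw [Real.sin_arctan, hsq]
    field_simp
  have hφ : φrs ρ q₁ q₂ θ = atan2 A B - Real.arctan (ρ / L) := rfl
  have hcosφ : Real.cos (φrs ρ q₁ q₂ θ) = (B * L + A * ρ) / s ^ 2 := by
    rw [hφ, Real.cos_sub, hcosα, hsinα, hcosγ, hsinγ]
    ring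
  have hsinφ : Real.sin (φrs ρ q₁ q₂ θ) = (A * L - B * ρ) / s ^ 2 := by
    rw [hφ, Real.sin_sub, hcosα, hsinα, hcosγ, hsinγ]
    ring
  have hsinβ : Real.sin β = q₂ / d := by rw [hβ₂]; field_simp
  have hcosβ : Real.cos β = q₁ / d := by rw [hβ₁]; field_simp
  rw [Real.sin_sub, Real.cos_sub, hcosφ, hsinφ, hsinβ, hcosβ]
  have key : s ^ 2 = (q₁ - ρ * Real.sin θ) ^ 2 + (q₂ + ρ * Real.cos θ) ^ 2 := by
    rw [hs2, ← hAB]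
  field_simp
  linear_combination (-ρ) * key
end

section
/- Let ρ > 0, q = (q₁, q₂) ∈ ℝ² with d := ‖q‖ ≥ 2ρ, β the polar angle of q, L(θ) = √(d² − 2ρ(q₁ sin θ − q₂ cos θ)), φ(θ) = atan2(q₂ + ρ cos θ, q₁ − ρ sin θ) − arctan(ρ / L(θ)), and τ(θ) = θ − φ(θ). Then for every θ with L(θ) > 0 and τ(θ) ∈ [0, 2π), one has d · sin(β − φ(θ)) ≤ 2ρ, with equality if and only if τ(θ) = π. -/
/- STATEMENT 3: with β the polar angle of q (d = ‖q‖ ≥ 2ρ) and τ(θ) = θ − φ(θ),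
for every θ with L(θ) > 0 and τ(θ) ∈ [0, 2π), one has d · sin(β − φ(θ)) ≤ 2ρ,
with equality if and only if τ(θ) = π. -/
lemma stmt3_aux (ρ x τ : ℝ) (hρ : 0 < ρ) (hkey : x = ρ * (1 - Real.cos τ))
    (hτ0 : 0 ≤ τ) (hτ2 : τ < 2 * Real.pi) :
    x ≤ 2 * ρ ∧ (x = 2 * ρ ↔ τ = Real.pi) := by
  have hpi := Real.pi_pos
  have hc := Real.neg_one_le_cos τ
  refine ⟨by nlinarith, ?_, ?_⟩
  · intro h
    have hc1 : Real.cos (τ - Real.pi) = 1 := by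
      rw [Real.cos_sub_pi]; nlinarith
    have := (Real.cos_eq_one_iff_of_lt_of_lt (by linarith) (by linarith)).mp hc1
    linarith
  · intro h
    rw [hkey, h, Real.cos_pi]; ring

set_option maxHeartbeats 1000000 in
theorem stmt3 (ρ q₁ q₂ β : ℝ) (hρ : 0 < ρ)
    (hd : 2 * ρ ≤ Real.sqrt (q₁ ^ 2 + q₂ ^ 2))
    (hβ₁ : q₁ = Real.sqrt (q₁ ^ 2 + q₂ ^ 2) * Real.cos β)
    (hβ₂ : q₂ = Real.sqrt (q₁ ^ 2 + q₂ ^ 2) * Real.sin β) :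
    ∀ θ : ℝ, 0 < Lrs ρ q₁ q₂ θ → θ - φrs ρ q₁ q₂ θ ∈ Set.Ico 0 (2 * Real.pi) →
      Real.sqrt (q₁ ^ 2 + q₂ ^ 2) * Real.sin (β - φrs ρ q₁ q₂ θ) ≤ 2 * ρ
      ∧ (Real.sqrt (q₁ ^ 2 + q₂ ^ 2) * Real.sin (β - φrs ρ q₁ q₂ θ) = 2 * ρ
          ↔ θ - φrs ρ q₁ q₂ θ = Real.pi) := by
  intro θ hL hτ
  set d := Real.sqrt (q₁ ^ 2 + q₂ ^ 2) with hd_def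
  have hd2 : d ^ 2 = q₁ ^ 2 + q₂ ^ 2 := Real.sq_sqrt (by positivity)
  set L := Lrs ρ q₁ q₂ θ with hLdef
  have hL2 : L ^ 2 = d ^ 2 - 2 * ρ * (q₁ * Real.sin θ - q₂ * Real.cos θ) := by
    rw [hLdef, Lrs, ← hd_def]
    exact Real.sq_sqrt (le_of_lt (Real.sqrt_pos.mp (by rw [hLdef, Lrs, ← hd_def] at hL; exact hL)))
  set A := q₁ - ρ * Real.sin θ with hA
  set B := q₂ + ρ * Real.cos θ with hB
  have hpyth : Real.sin θ ^ 2 + Real.cos θ ^ 2 = 1 := Real.sin_sq_add_cos_sq θ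
  have hAB : A ^ 2 + B ^ 2 = L ^ 2 + ρ ^ 2 := by rw [hA, hB, hL2]; nlinarith [hpyth]
  set r := Real.sqrt (L ^ 2 + ρ ^ 2) with hr
  have hrpos : 0 < r := Real.sqrt_pos.mpr (by positivity)
  have hr2 : r ^ 2 = L ^ 2 + ρ ^ 2 := Real.sq_sqrt (by positivity)
  set z : ℂ := ⟨A, B⟩ with hz
  have habs : ‖z‖ = r := by
    rw [Complex.norm_def, Complex.normSq_mk, hr]
    congr 1; nlinarith [hAB]
  have hzne : z ≠ 0 := by
    intro h; rw [h] at habs; simp at habs; linarith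
  set ψ := atan2 B A with hψ
  have hψz : ψ = Complex.arg z := rfl
  have hcosψ : Real.cos ψ = A / r := by rw [hψz, Complex.cos_arg hzne, habs]
  have hsinψ : Real.sin ψ = B / r := by rw [hψz, Complex.sin_arg, habs]
  set α := Real.arctan (ρ / L) with hα
  have hsqrt : Real.sqrt (1 + (ρ / L) ^ 2) = r / L := by
    have h1 : 1 + (ρ / L) ^ 2 = (L ^ 2 + ρ ^ 2) / L ^ 2 := by field_simp
    rw [h1, Real.sqrt_div (by positivity), Real.sqrt_sq hL.le, hr]
  have hsinα : Real.sin α = ρ / r := by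
    rw [hα, Real.sin_arctan, hsqrt]; field_simp
  have hcosα : Real.cos α = L / r := by
    rw [hα, Real.cos_arctan, hsqrt]; field_simp
  have hφ : φrs ρ q₁ q₂ θ = ψ - α := by
    simp only [hψ, hα, hA, hB, hLdef, φrs]
  rw [hφ] at hτ ⊢
  have hsinβ : d * Real.sin β = r * Real.sin ψ - ρ * Real.cos θ := by
    have : B = r * Real.sin ψ := by rw [hsinψ]; field_simp
    rw [← hβ₂]; rw [hB] at this; linarith
  have hcosβ : d * Real.cos β = r * Real.cos ψ + ρ * Real.sin θ := by
    have : A = r * Real.cos ψ := by rw [hcosψ]; field_simp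
    rw [← hβ₁]; rw [hA] at this; linarith
  have hpψ : Real.sin ψ ^ 2 + Real.cos ψ ^ 2 = 1 := Real.sin_sq_add_cos_sq ψ
  have key : d * Real.sin (β - (ψ - α)) = ρ * (1 - Real.cos (θ - (ψ - α))) := by
    rw [Real.sin_sub β (ψ - α), Real.cos_sub θ (ψ - α),
        Real.sin_sub ψ α, Real.cos_sub ψ α, hsinα, hcosα]
    field_simp
    linear_combination (Real.cos ψ * L + Real.sin ψ * ρ) * hsinβ - (Real.sin ψ * L - Real.cos ψ * ρ) * hcosβ + ρ * r * hpψ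
  clear_value d L A B r z ψ α
  exact stmt3_aux ρ _ _ hρ key hτ.1 hτ.2
end

section
/- Let ρ > 0, q = (q₁, q₂) ∈ ℝ² with d := ‖q‖ ≥ 2ρ, β the polar angle of q, L(θ) = √(d² − 2ρ(q₁ sin θ − q₂ cos θ)), φ(θ) = atan2(q₂ + ρ cos θ, q₁ − ρ sin θ) − arctan(ρ / L(θ)), and D(θ) = ρ(θ − φ(θ)) + L(θ). Then on any open interval of headings θ on which L(θ) > 0 and θ − φ(θ) ∈ (0, 2π), the function D is twice differentiable and D″(θ) = d cos(β − φ(θ)) · (d cos(β − φ(θ)) − L(θ)) / L(θ). -/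
namespace Stmt4Aux

open Real

noncomputable def mf (q₁ q₂ θ : ℝ) : ℝ := q₁ * Real.sin θ - q₂ * Real.cos θ
noncomputable def nf (q₁ q₂ θ : ℝ) : ℝ := q₁ * Real.cos θ + q₂ * Real.sin θ
noncomputable def Pf (ρ q₁ q₂ θ : ℝ) : ℝ := Lrs ρ q₁ q₂ θ ^ 2 + ρ ^ 2
noncomputable def Cf (ρ q₁ q₂ θ : ℝ) : ℝ :=
  (Lrs ρ q₁ q₂ θ * nf q₁ q₂ θ + ρ * (ρ - mf q₁ q₂ θ)) / Pf ρ q₁ q₂ θ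
noncomputable def Sf (ρ q₁ q₂ θ : ℝ) : ℝ :=
  (Lrs ρ q₁ q₂ θ * (mf q₁ q₂ θ - ρ) + ρ * nf q₁ q₂ θ) / Pf ρ q₁ q₂ θ
noncomputable def Kf (ρ q₁ q₂ θ : ℝ) : ℝ :=
  (Lrs ρ q₁ q₂ θ * ((q₁ ^ 2 + q₂ ^ 2) - ρ * mf q₁ q₂ θ) + ρ ^ 2 * nf q₁ q₂ θ) / Pf ρ q₁ q₂ θ
noncomputable def lp (ρ q₁ q₂ θ : ℝ) : ℝ := -ρ * nf q₁ q₂ θ / Lrs ρ q₁ q₂ θ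
noncomputable def cd (ρ q₁ q₂ θ : ℝ) : ℝ :=
  ((lp ρ q₁ q₂ θ * nf q₁ q₂ θ - Lrs ρ q₁ q₂ θ * mf q₁ q₂ θ - ρ * nf q₁ q₂ θ) * Pf ρ q₁ q₂ θ
    - (Lrs ρ q₁ q₂ θ * nf q₁ q₂ θ + ρ * (ρ - mf q₁ q₂ θ)) * (2 * Lrs ρ q₁ q₂ θ * lp ρ q₁ q₂ θ))
    / Pf ρ q₁ q₂ θ ^ 2
noncomputable def sd (ρ q₁ q₂ θ : ℝ) : ℝ :=
  ((lp ρ q₁ q₂ θ * (mf q₁ q₂ θ - ρ) + Lrs ρ q₁ q₂ θ * nf q₁ q₂ θ - ρ * mf q₁ q₂ θ) * Pf ρ q₁ q₂ θ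
    - (Lrs ρ q₁ q₂ θ * (mf q₁ q₂ θ - ρ) + ρ * nf q₁ q₂ θ) * (2 * Lrs ρ q₁ q₂ θ * lp ρ q₁ q₂ θ))
    / Pf ρ q₁ q₂ θ ^ 2
noncomputable def kd (ρ q₁ q₂ θ : ℝ) : ℝ :=
  ((lp ρ q₁ q₂ θ * ((q₁ ^ 2 + q₂ ^ 2) - ρ * mf q₁ q₂ θ) - Lrs ρ q₁ q₂ θ * (ρ * nf q₁ q₂ θ)
      - ρ ^ 2 * mf q₁ q₂ θ) * Pf ρ q₁ q₂ θ
    - (Lrs ρ q₁ q₂ θ * ((q₁ ^ 2 + q₂ ^ 2) - ρ * mf q₁ q₂ θ) + ρ ^ 2 * nf q₁ q₂ θ)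
      * (2 * Lrs ρ q₁ q₂ θ * lp ρ q₁ q₂ θ)) / Pf ρ q₁ q₂ θ ^ 2
noncomputable def Gf (ρ q₁ q₂ θ : ℝ) : ℝ :=
  ρ * (Kf ρ q₁ q₂ θ - nf q₁ q₂ θ) / Lrs ρ q₁ q₂ θ
noncomputable def gd (ρ q₁ q₂ θ : ℝ) : ℝ :=
  (ρ * (kd ρ q₁ q₂ θ + mf q₁ q₂ θ) * Lrs ρ q₁ q₂ θ
    - ρ * (Kf ρ q₁ q₂ θ - nf q₁ q₂ θ) * lp ρ q₁ q₂ θ) / Lrs ρ q₁ q₂ θ ^ 2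

/-! ### Basic facts -/

lemma Lrs_eq (ρ q₁ q₂ θ : ℝ) :
    Lrs ρ q₁ q₂ θ = Real.sqrt ((q₁ ^ 2 + q₂ ^ 2) - 2 * ρ * mf q₁ q₂ θ) := by
  rw [Lrs, Real.sq_sqrt (by positivity), mf]

lemma arg_pos {ρ q₁ q₂ θ : ℝ} (hl : 0 < Lrs ρ q₁ q₂ θ) :
    0 < (q₁ ^ 2 + q₂ ^ 2) - 2 * ρ * mf q₁ q₂ θ := by
  rw [Lrs_eq] at hl; exact Real.sqrt_pos.mp hl

lemma sq_L {ρ q₁ q₂ θ : ℝ} (hl : 0 < Lrs ρ q₁ q₂ θ) :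
    Lrs ρ q₁ q₂ θ ^ 2 = (q₁ ^ 2 + q₂ ^ 2) - 2 * ρ * mf q₁ q₂ θ := by
  rw [Lrs_eq]; exact Real.sq_sqrt (arg_pos hl).le

lemma Pf_pos {ρ q₁ q₂ θ : ℝ} (hl : 0 < Lrs ρ q₁ q₂ θ) : 0 < Pf ρ q₁ q₂ θ :=
  add_pos_of_pos_of_nonneg (pow_pos hl 2) (sq_nonneg ρ)

lemma mn_sq (q₁ q₂ θ : ℝ) : mf q₁ q₂ θ ^ 2 + nf q₁ q₂ θ ^ 2 = q₁ ^ 2 + q₂ ^ 2 := by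
  have := Real.sin_sq_add_cos_sq θ
  simp only [mf, nf]; linear_combination (q₁ ^ 2 + q₂ ^ 2) * this

lemma rel_h1 {ρ q₁ q₂ θ : ℝ} (hl : 0 < Lrs ρ q₁ q₂ θ) :
    Lrs ρ q₁ q₂ θ ^ 2 = mf q₁ q₂ θ ^ 2 + nf q₁ q₂ θ ^ 2 - 2 * ρ * mf q₁ q₂ θ := by
  linear_combination sq_L hl - mn_sq q₁ q₂ θ

/-! ### Algebraic keys -/

section Alg
variable {l m n r : ℝ}

lemma key1 (h1 : l ^ 2 = m ^ 2 + n ^ 2 - 2 * r * m) :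
    (l * n + r * (r - m)) ^ 2 + (l * (m - r) + r * n) ^ 2 = (l ^ 2 + r ^ 2) ^ 2 := by
  linear_combination (-(r ^ 2) - l ^ 2) * h1

lemma key2 {e : ℝ} (h1 : l ^ 2 = e - 2 * r * m) (h2 : m ^ 2 + n ^ 2 = e) :
    (l * (m - r) + r * n) * (l * (e - r * m) + r ^ 2 * n)
      = l * (l * n + r * (r - m)) * (-2 * r * n)
        - (-(r * n ^ 2) - l ^ 2 * m - r * n * l) * (l ^ 2 + r ^ 2) := by
  linear_combination ((-1 : ℝ) * r * e + n ^ 2 * r + m ^ 2 * r + (-1 : ℝ) * l * n * r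
      + (-1 : ℝ) * l ^ 2 * m) * h1 - ((-1 : ℝ) * r * e + (2 : ℝ) * m * r ^ 2) * h2

lemma key3 {e : ℝ} (h1 : l ^ 2 = e - 2 * r * m) (h2 : m ^ 2 + n ^ 2 = e) :
    (l * n + r * (r - m)) * (l * (e - r * m) + r ^ 2 * n)
      = (-(r * n * (m - r)) + l ^ 2 * n - r * m * l) * (l ^ 2 + r ^ 2)
        - l * (l * (m - r) + r * n) * (-2 * r * n) := by
  linear_combination (l * m * r + (-1 : ℝ) * l ^ 2 * n) * h1 - (l * r ^ 2) * h2

lemma key4 {e : ℝ} (h1 : l ^ 2 = e - 2 * r * m) (h2 : m ^ 2 + n ^ 2 = e) :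
    r * (l * ((-(r * n * (e - r * m)) - l ^ 2 * r * n - l * r ^ 2 * m) * (l ^ 2 + r ^ 2)
          - l * (l * (e - r * m) + r ^ 2 * n) * (-2 * r * n))
        + m * l ^ 2 * (l ^ 2 + r ^ 2) ^ 2
        + ((l * (e - r * m) + r ^ 2 * n) - n * (l ^ 2 + r ^ 2)) * r * n * (l ^ 2 + r ^ 2))
      = l ^ 2 * (l * (e - r * m) + r ^ 2 * n)
          * ((l * (e - r * m) + r ^ 2 * n) - l * (l ^ 2 + r ^ 2)) := by
  linear_combination (r ^ 2 * e ^ 2 + (-1 : ℝ) * n ^ 2 * r ^ 2 * e + (-2 : ℝ) * m * r ^ 3 * e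
      + (2 : ℝ) * m * n ^ 2 * r ^ 3 + (-1 : ℝ) * m ^ 2 * r ^ 2 * e + (2 : ℝ) * m ^ 3 * r ^ 3
      + l ^ 2 * r ^ 2 * e + (-1 : ℝ) * l ^ 2 * n ^ 2 * r ^ 2 + (-1 : ℝ) * l ^ 2 * m ^ 2 * r ^ 2
      + l ^ 4 * e) * h1
    - (r ^ 2 * e ^ 2 + (-4 : ℝ) * m * r ^ 3 * e + (4 : ℝ) * m ^ 2 * r ^ 4) * h2

end Alg

/-! ### Pointwise trigonometric identities -/

lemma cos_sin_phi {ρ q₁ q₂ θ : ℝ} (hl : 0 < Lrs ρ q₁ q₂ θ) :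
    Real.cos (φrs ρ q₁ q₂ θ)
        = ((q₁ - ρ * Real.sin θ) * Lrs ρ q₁ q₂ θ + (q₂ + ρ * Real.cos θ) * ρ) / Pf ρ q₁ q₂ θ
      ∧ Real.sin (φrs ρ q₁ q₂ θ)
        = ((q₂ + ρ * Real.cos θ) * Lrs ρ q₁ q₂ θ - (q₁ - ρ * Real.sin θ) * ρ) / Pf ρ q₁ q₂ θ := by
  set u := q₁ - ρ * Real.sin θ with hu
  set v := q₂ + ρ * Real.cos θ with hv
  set l := Lrs ρ q₁ q₂ θ with hldef
  set P := Pf ρ q₁ q₂ θ with hP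
  have hPpos : 0 < P := Pf_pos hl
  have huv : u ^ 2 + v ^ 2 = P := by
    have h := sq_L hl
    simp only [mf] at h
    rw [← hldef] at h
    rw [hP, Pf, ← hldef, hu, hv]
    linear_combination ρ ^ 2 * Real.sin_sq_add_cos_sq θ - h
  have hsP : 0 < Real.sqrt P := Real.sqrt_pos.mpr hPpos
  have hsq : Real.sqrt P * Real.sqrt P = P := Real.mul_self_sqrt hPpos.le
  have hz : (⟨u, v⟩ : ℂ) ≠ 0 := by
    intro h
    have h1 : u = 0 := congrArg Complex.re h
    have h2 : v = 0 := congrArg Complex.im h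
    rw [h1, h2] at huv; simp at huv; linarith
  have habs : ‖(⟨u, v⟩ : ℂ)‖ = Real.sqrt P := by
    rw [Complex.norm_def, Complex.normSq_mk, ← huv]; ring_nf
  have hca : Real.cos (atan2 v u) = u / Real.sqrt P := by
    rw [atan2, Complex.cos_arg hz, habs]
  have hsa : Real.sin (atan2 v u) = v / Real.sqrt P := by
    rw [atan2, Complex.sin_arg, habs]
  have h1 : 1 + (ρ / l) ^ 2 = P / l ^ 2 := by
    rw [hP, Pf, ← hldef]; field_simp
  have h2 : Real.sqrt (1 + (ρ / l) ^ 2) = Real.sqrt P / l := by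
    rw [h1, Real.sqrt_div hPpos.le, Real.sqrt_sq hl.le]
  have hcb : Real.cos (Real.arctan (ρ / l)) = l / Real.sqrt P := by
    rw [Real.cos_arctan, h2]; field_simp
  have hsb : Real.sin (Real.arctan (ρ / l)) = ρ / Real.sqrt P := by
    rw [Real.sin_arctan, h2]; field_simp
  have hφ : φrs ρ q₁ q₂ θ = atan2 v u - Real.arctan (ρ / l) := rfl
  constructor
  · rw [hφ, Real.cos_sub, hca, hsa, hcb, hsb, div_mul_div_comm, div_mul_div_comm, hsq,
      ← add_div]
  · rw [hφ, Real.sin_sub, hca, hsa, hcb, hsb, div_mul_div_comm, div_mul_div_comm, hsq,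
      div_sub_div_same]

lemma cos_tau {ρ q₁ q₂ θ : ℝ} (hl : 0 < Lrs ρ q₁ q₂ θ) :
    Real.cos (θ - φrs ρ q₁ q₂ θ) = Cf ρ q₁ q₂ θ := by
  rw [Real.cos_sub, (cos_sin_phi hl).1, (cos_sin_phi hl).2, Cf, mf, nf,
    mul_div_assoc', mul_div_assoc', ← add_div]
  congr 1
  linear_combination ρ ^ 2 * Real.sin_sq_add_cos_sq θ

lemma sin_tau {ρ q₁ q₂ θ : ℝ} (hl : 0 < Lrs ρ q₁ q₂ θ) :
    Real.sin (θ - φrs ρ q₁ q₂ θ) = Sf ρ q₁ q₂ θ := by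
  rw [Real.sin_sub, (cos_sin_phi hl).1, (cos_sin_phi hl).2, Sf, mf, nf,
    mul_div_assoc', mul_div_assoc', div_sub_div_same]
  congr 1
  linear_combination (-(ρ * Lrs ρ q₁ q₂ θ)) * Real.sin_sq_add_cos_sq θ

lemma K_eq {ρ q₁ q₂ β θ : ℝ} (hl : 0 < Lrs ρ q₁ q₂ θ)
    (hβ₁ : q₁ = Real.sqrt (q₁ ^ 2 + q₂ ^ 2) * Real.cos β)
    (hβ₂ : q₂ = Real.sqrt (q₁ ^ 2 + q₂ ^ 2) * Real.sin β) :
    Real.sqrt (q₁ ^ 2 + q₂ ^ 2) * Real.cos (β - φrs ρ q₁ q₂ θ) = Kf ρ q₁ q₂ θ := by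
  rw [Real.cos_sub, (cos_sin_phi hl).1, (cos_sin_phi hl).2, Kf, mf, nf]
  rw [mul_add, ← mul_assoc, ← mul_assoc, ← hβ₁, ← hβ₂,
    mul_div_assoc', mul_div_assoc', ← add_div]
  congr 1
  ring

/-! ### Derivatives -/

lemma hasDerivAt_mf (q₁ q₂ θ : ℝ) : HasDerivAt (mf q₁ q₂) (nf q₁ q₂ θ) θ := by
  have h := ((Real.hasDerivAt_sin θ).const_mul q₁).sub ((Real.hasDerivAt_cos θ).const_mul q₂)
  have hfun : mf q₁ q₂ = fun t => q₁ * Real.sin t - q₂ * Real.cos t := rfl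
  rw [hfun]
  refine h.congr_deriv ?_
  rw [nf]; ring

lemma hasDerivAt_nf (q₁ q₂ θ : ℝ) : HasDerivAt (nf q₁ q₂) (-mf q₁ q₂ θ) θ := by
  have h := ((Real.hasDerivAt_cos θ).const_mul q₁).add ((Real.hasDerivAt_sin θ).const_mul q₂)
  have hfun : nf q₁ q₂ = fun t => q₁ * Real.cos t + q₂ * Real.sin t := rfl
  rw [hfun]
  refine h.congr_deriv ?_
  rw [mf]; ring

lemma hasDerivAt_L {ρ q₁ q₂ θ : ℝ} (hl : 0 < Lrs ρ q₁ q₂ θ) :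
    HasDerivAt (Lrs ρ q₁ q₂) (lp ρ q₁ q₂ θ) θ := by
  have hfun : Lrs ρ q₁ q₂ = fun t => Real.sqrt ((q₁ ^ 2 + q₂ ^ 2) - 2 * ρ * mf q₁ q₂ t) :=
    funext fun t => Lrs_eq ρ q₁ q₂ t
  have hin : HasDerivAt (fun t => (q₁ ^ 2 + q₂ ^ 2) - 2 * ρ * mf q₁ q₂ t)
      (0 - 2 * ρ * nf q₁ q₂ θ) θ :=
    (hasDerivAt_const θ _).sub ((hasDerivAt_mf q₁ q₂ θ).const_mul (2 * ρ))
  have h := hin.sqrt (arg_pos hl).ne'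
  rw [hfun]
  convert h using 1
  rw [lp, ← Lrs_eq]
  field_simp
  ring

lemma hasDerivAt_Pf {ρ q₁ q₂ θ : ℝ} (hl : 0 < Lrs ρ q₁ q₂ θ) :
    HasDerivAt (Pf ρ q₁ q₂) (2 * Lrs ρ q₁ q₂ θ * lp ρ q₁ q₂ θ) θ := by
  have hfun : Pf ρ q₁ q₂ = fun t => Lrs ρ q₁ q₂ t ^ 2 + ρ ^ 2 := rfl
  rw [hfun]
  have h := (((hasDerivAt_L hl).pow 2).add_const (ρ ^ 2))
  refine h.congr_deriv ?_
  ring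

lemma hasDerivAt_Cf {ρ q₁ q₂ θ : ℝ} (hl : 0 < Lrs ρ q₁ q₂ θ) :
    HasDerivAt (Cf ρ q₁ q₂) (cd ρ q₁ q₂ θ) θ := by
  have hfun : Cf ρ q₁ q₂ = fun t =>
      (Lrs ρ q₁ q₂ t * nf q₁ q₂ t + ρ * (ρ - mf q₁ q₂ t)) / Pf ρ q₁ q₂ t := rfl
  rw [hfun]
  have hnum : HasDerivAt (fun t => Lrs ρ q₁ q₂ t * nf q₁ q₂ t + ρ * (ρ - mf q₁ q₂ t))
      (lp ρ q₁ q₂ θ * nf q₁ q₂ θ - Lrs ρ q₁ q₂ θ * mf q₁ q₂ θ - ρ * nf q₁ q₂ θ) θ := by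
    have h := ((hasDerivAt_L hl).mul (hasDerivAt_nf q₁ q₂ θ)).add
      (((hasDerivAt_const θ ρ).sub (hasDerivAt_mf q₁ q₂ θ)).const_mul ρ)
    refine h.congr_deriv ?_
    ring
  rw [cd]
  exact hnum.div (hasDerivAt_Pf hl) (Pf_pos hl).ne'

lemma hasDerivAt_Sf {ρ q₁ q₂ θ : ℝ} (hl : 0 < Lrs ρ q₁ q₂ θ) :
    HasDerivAt (Sf ρ q₁ q₂) (sd ρ q₁ q₂ θ) θ := by
  have hfun : Sf ρ q₁ q₂ = fun t =>
      (Lrs ρ q₁ q₂ t * (mf q₁ q₂ t - ρ) + ρ * nf q₁ q₂ t) / Pf ρ q₁ q₂ t := rfl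
  rw [hfun]
  have hnum : HasDerivAt (fun t => Lrs ρ q₁ q₂ t * (mf q₁ q₂ t - ρ) + ρ * nf q₁ q₂ t)
      (lp ρ q₁ q₂ θ * (mf q₁ q₂ θ - ρ) + Lrs ρ q₁ q₂ θ * nf q₁ q₂ θ - ρ * mf q₁ q₂ θ) θ := by
    have h := ((hasDerivAt_L hl).mul ((hasDerivAt_mf q₁ q₂ θ).sub_const ρ)).add
      ((hasDerivAt_nf q₁ q₂ θ).const_mul ρ)
    refine h.congr_deriv ?_
    ring
  rw [sd]
  exact hnum.div (hasDerivAt_Pf hl) (Pf_pos hl).ne'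

lemma hasDerivAt_Kf {ρ q₁ q₂ θ : ℝ} (hl : 0 < Lrs ρ q₁ q₂ θ) :
    HasDerivAt (Kf ρ q₁ q₂) (kd ρ q₁ q₂ θ) θ := by
  have hfun : Kf ρ q₁ q₂ = fun t =>
      (Lrs ρ q₁ q₂ t * ((q₁ ^ 2 + q₂ ^ 2) - ρ * mf q₁ q₂ t) + ρ ^ 2 * nf q₁ q₂ t)
        / Pf ρ q₁ q₂ t := rfl
  rw [hfun]
  have hnum : HasDerivAt
      (fun t => Lrs ρ q₁ q₂ t * ((q₁ ^ 2 + q₂ ^ 2) - ρ * mf q₁ q₂ t) + ρ ^ 2 * nf q₁ q₂ t)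
      (lp ρ q₁ q₂ θ * ((q₁ ^ 2 + q₂ ^ 2) - ρ * mf q₁ q₂ θ) - Lrs ρ q₁ q₂ θ * (ρ * nf q₁ q₂ θ)
        - ρ ^ 2 * mf q₁ q₂ θ) θ := by
    have h := ((hasDerivAt_L hl).mul
        (((hasDerivAt_const θ (q₁ ^ 2 + q₂ ^ 2))).sub ((hasDerivAt_mf q₁ q₂ θ).const_mul ρ))).add
      ((hasDerivAt_nf q₁ q₂ θ).const_mul (ρ ^ 2))
    refine h.congr_deriv ?_
    simp only [Pi.sub_apply]
    ring
  rw [kd]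
  exact hnum.div (hasDerivAt_Pf hl) (Pf_pos hl).ne'

lemma hasDerivAt_Gf {ρ q₁ q₂ θ : ℝ} (hl : 0 < Lrs ρ q₁ q₂ θ) :
    HasDerivAt (Gf ρ q₁ q₂) (gd ρ q₁ q₂ θ) θ := by
  have hfun : Gf ρ q₁ q₂ = fun t =>
      ρ * (Kf ρ q₁ q₂ t - nf q₁ q₂ t) / Lrs ρ q₁ q₂ t := rfl
  rw [hfun]
  have hnum : HasDerivAt (fun t => ρ * (Kf ρ q₁ q₂ t - nf q₁ q₂ t))
      (ρ * (kd ρ q₁ q₂ θ + mf q₁ q₂ θ)) θ := by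
    have h := ((hasDerivAt_Kf hl).sub (hasDerivAt_nf q₁ q₂ θ)).const_mul ρ
    refine h.congr_deriv ?_
    ring
  rw [gd]
  exact hnum.div (hasDerivAt_L hl) hl.ne'

/-! ### Identities between derivative values -/

lemma CS_sq {ρ q₁ q₂ θ : ℝ} (hl : 0 < Lrs ρ q₁ q₂ θ) :
    Cf ρ q₁ q₂ θ ^ 2 + Sf ρ q₁ q₂ θ ^ 2 = 1 := by
  have h1 := rel_h1 hl
  have hP := (Pf_pos hl).ne'
  rw [Cf, Sf, div_pow, div_pow, ← add_div, div_eq_one_iff_eq (by positivity)]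
  rw [Pf] at *
  linear_combination key1 h1

lemma SK_cd {ρ q₁ q₂ θ : ℝ} (hl : 0 < Lrs ρ q₁ q₂ θ) :
    Sf ρ q₁ q₂ θ * (Kf ρ q₁ q₂ θ / Lrs ρ q₁ q₂ θ) = -cd ρ q₁ q₂ θ := by
  have h1 := sq_L hl
  have h2 := mn_sq q₁ q₂ θ
  simp only [Sf, Kf, cd, lp, Pf]
  have hl0 : Lrs ρ q₁ q₂ θ ≠ 0 := hl.ne'
  have hP : Lrs ρ q₁ q₂ θ ^ 2 + ρ ^ 2 ≠ 0 := by
    have := Pf_pos hl; rw [Pf] at this; exact this.ne'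
  field_simp
  linear_combination key2 h1 h2


lemma CK_sd {ρ q₁ q₂ θ : ℝ} (hl : 0 < Lrs ρ q₁ q₂ θ) :
    Cf ρ q₁ q₂ θ * (Kf ρ q₁ q₂ θ / Lrs ρ q₁ q₂ θ) = sd ρ q₁ q₂ θ := by
  have h1 := sq_L hl
  have h2 := mn_sq q₁ q₂ θ
  simp only [Cf, Kf, sd, lp, Pf]
  have hl0 : Lrs ρ q₁ q₂ θ ≠ 0 := hl.ne'
  have hP : Lrs ρ q₁ q₂ θ ^ 2 + ρ ^ 2 ≠ 0 := by
    have := Pf_pos hl; rw [Pf] at this; exact this.ne'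
  field_simp
  linear_combination key3 h1 h2


lemma gd_eq {ρ q₁ q₂ θ : ℝ} (hl : 0 < Lrs ρ q₁ q₂ θ) :
    gd ρ q₁ q₂ θ = Kf ρ q₁ q₂ θ * (Kf ρ q₁ q₂ θ - Lrs ρ q₁ q₂ θ) / Lrs ρ q₁ q₂ θ := by
  have h1 := sq_L hl
  have h2 := mn_sq q₁ q₂ θ
  simp only [gd, kd, Kf, lp, Pf]
  have hl0 : Lrs ρ q₁ q₂ θ ≠ 0 := hl.ne'
  have hP : Lrs ρ q₁ q₂ θ ^ 2 + ρ ^ 2 ≠ 0 := by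
    have := Pf_pos hl; rw [Pf] at this; exact this.ne'
  field_simp
  linear_combination key4 h1 h2

/-! ### Derivative of τ(θ) = θ − φ(θ) -/

lemma hasDerivAt_tau {ρ q₁ q₂ a b : ℝ}
    (hL : ∀ t ∈ Set.Ioo a b, 0 < Lrs ρ q₁ q₂ t)
    (hτ : ∀ t ∈ Set.Ioo a b, t - φrs ρ q₁ q₂ t ∈ Set.Ioo 0 (2 * Real.pi))
    {θ : ℝ} (hθ : θ ∈ Set.Ioo a b) :
    HasDerivAt (fun t => t - φrs ρ q₁ q₂ t) (Kf ρ q₁ q₂ θ / Lrs ρ q₁ q₂ θ) θ := by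
  have hl := hL θ hθ
  have hmem : Set.Ioo a b ∈ nhds θ := isOpen_Ioo.mem_nhds hθ
  have hCS1 := CS_sq hl
  rcases lt_trichotomy (Sf ρ q₁ q₂ θ) 0 with hS | hS | hS
  · -- S < 0 : τ = 2π − arccos ∘ C locally
    have hS0 : Sf ρ q₁ q₂ θ ≠ 0 := hS.ne
    have hCne1 : Cf ρ q₁ q₂ θ ≠ 1 := by nlinarith
    have hCnem1 : Cf ρ q₁ q₂ θ ≠ -1 := by nlinarith
    have hScont : ContinuousAt (Sf ρ q₁ q₂) θ :=
      (hasDerivAt_Sf hl).differentiableAt.continuousAt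
    have hev : ∀ᶠ t in nhds θ, Sf ρ q₁ q₂ t < 0 := hScont (Iio_mem_nhds hS)
    have heq : (fun t => t - φrs ρ q₁ q₂ t) =ᶠ[nhds θ]
        fun t => 2 * Real.pi - Real.arccos (Cf ρ q₁ q₂ t) := by
      filter_upwards [hev, hmem] with t hSt ht
      have h0 := (hτ t ht).1
      have h2 := (hτ t ht).2
      have hcos := cos_tau (hL t ht)
      have hsin := sin_tau (hL t ht)
      have hπlt : Real.pi < t - φrs ρ q₁ q₂ t := by
        by_contra h
        push_neg at h
        have := Real.sin_nonneg_of_nonneg_of_le_pi h0.le h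
        rw [hsin] at this; linarith
      have h1 : Real.arccos (Real.cos (t - φrs ρ q₁ q₂ t)) = 2 * Real.pi - (t - φrs ρ q₁ q₂ t) := by
        rw [← Real.cos_two_pi_sub]
        exact Real.arccos_cos (by linarith) (by linarith)
      rw [← hcos, h1]; ring
    have harc := ((Real.hasDerivAt_arccos hCnem1 hCne1).comp θ (hasDerivAt_Cf hl)).const_sub
      (2 * Real.pi)
    have hfin := harc.congr_of_eventuallyEq heq
    have hsqrt : Real.sqrt (1 - Cf ρ q₁ q₂ θ ^ 2) = -Sf ρ q₁ q₂ θ := by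
      rw [show (1 : ℝ) - Cf ρ q₁ q₂ θ ^ 2 = (-Sf ρ q₁ q₂ θ) ^ 2 by nlinarith]
      exact Real.sqrt_sq (by linarith)
    have hkey := SK_cd hl
    have hval : Kf ρ q₁ q₂ θ / Lrs ρ q₁ q₂ θ = -cd ρ q₁ q₂ θ / Sf ρ q₁ q₂ θ := by
      rw [eq_div_iff hS0]; linear_combination hkey
    refine hfin.congr_deriv ?_
    rw [hsqrt, hval]
    field_simp
  · -- S = 0 : C = −1, τ = π + arcsin ∘ (−S) locally
    have hC2 : (Cf ρ q₁ q₂ θ - 1) * (Cf ρ q₁ q₂ θ + 1) = 0 := by nlinarith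
    have hC : Cf ρ q₁ q₂ θ = -1 := by
      rcases mul_eq_zero.mp hC2 with h | h
      · exfalso
        have hC1 : Cf ρ q₁ q₂ θ = 1 := by linarith
        have hcos := cos_tau hl
        rw [hC1] at hcos
        have h0 := (hτ θ hθ).1
        have h2 := (hτ θ hθ).2
        have := (Real.cos_eq_one_iff_of_lt_of_lt (by linarith [Real.pi_pos]) h2).mp hcos
        linarith
      · linarith
    have hCcont : ContinuousAt (Cf ρ q₁ q₂) θ :=
      (hasDerivAt_Cf hl).differentiableAt.continuousAt
    have hev : ∀ᶠ t in nhds θ, Cf ρ q₁ q₂ t < 0 :=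
      hCcont (Iio_mem_nhds (by rw [hC]; norm_num))
    have heq : (fun t => t - φrs ρ q₁ q₂ t) =ᶠ[nhds θ]
        fun t => Real.pi + Real.arcsin (-Sf ρ q₁ q₂ t) := by
      filter_upwards [hev, hmem] with t hCt ht
      have h0 := (hτ t ht).1
      have h2 := (hτ t ht).2
      have hcos := cos_tau (hL t ht)
      have hsin := sin_tau (hL t ht)
      have hgt : Real.pi / 2 < t - φrs ρ q₁ q₂ t := by
        by_contra h
        push_neg at h
        have : 0 ≤ Real.cos (t - φrs ρ q₁ q₂ t) :=
          Real.cos_nonneg_of_mem_Icc ⟨by linarith, h⟩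
        rw [hcos] at this; linarith
      have hlt : t - φrs ρ q₁ q₂ t < 3 * Real.pi / 2 := by
        by_contra h
        push_neg at h
        have : 0 ≤ Real.cos (t - φrs ρ q₁ q₂ t - 2 * Real.pi) :=
          Real.cos_nonneg_of_mem_Icc ⟨by linarith, by linarith⟩
        rw [Real.cos_sub_two_pi, hcos] at this; linarith
      have harc : Real.arcsin (Real.sin (t - φrs ρ q₁ q₂ t - Real.pi))
          = t - φrs ρ q₁ q₂ t - Real.pi :=
        Real.arcsin_sin (by linarith) (by linarith)
      rw [Real.sin_sub_pi] at harc
      rw [← hsin, harc]; ring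
    have hm1 : -Sf ρ q₁ q₂ θ ≠ -1 := by rw [hS]; norm_num
    have hp1 : -Sf ρ q₁ q₂ θ ≠ 1 := by rw [hS]; norm_num
    have harc := ((Real.hasDerivAt_arcsin hm1 hp1).comp θ
      ((hasDerivAt_Sf hl).neg)).const_add Real.pi
    have hfin := harc.congr_of_eventuallyEq heq
    have hkey := CK_sd hl
    rw [hC] at hkey
    refine hfin.congr_deriv ?_
    rw [hS]
    norm_num
    linarith
  · -- S > 0 : τ = arccos ∘ C locally
    have hS0 : Sf ρ q₁ q₂ θ ≠ 0 := hS.ne'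
    have hCne1 : Cf ρ q₁ q₂ θ ≠ 1 := by nlinarith
    have hCnem1 : Cf ρ q₁ q₂ θ ≠ -1 := by nlinarith
    have hScont : ContinuousAt (Sf ρ q₁ q₂) θ :=
      (hasDerivAt_Sf hl).differentiableAt.continuousAt
    have hev : ∀ᶠ t in nhds θ, 0 < Sf ρ q₁ q₂ t := hScont (Ioi_mem_nhds hS)
    have heq : (fun t => t - φrs ρ q₁ q₂ t) =ᶠ[nhds θ]
        fun t => Real.arccos (Cf ρ q₁ q₂ t) := by
      filter_upwards [hev, hmem] with t hSt ht
      have h0 := (hτ t ht).1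
      have h2 := (hτ t ht).2
      have hcos := cos_tau (hL t ht)
      have hsin := sin_tau (hL t ht)
      have hle : t - φrs ρ q₁ q₂ t ≤ Real.pi := by
        by_contra h
        push_neg at h
        have := Real.sin_neg_of_neg_of_neg_pi_lt (x := t - φrs ρ q₁ q₂ t - 2 * Real.pi)
          (by linarith) (by linarith)
        rw [Real.sin_sub_two_pi, hsin] at this; linarith
      rw [← hcos, Real.arccos_cos h0.le hle]
    have harc := (Real.hasDerivAt_arccos hCnem1 hCne1).comp θ (hasDerivAt_Cf hl)
    have hfin := harc.congr_of_eventuallyEq heq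
    have hsqrt : Real.sqrt (1 - Cf ρ q₁ q₂ θ ^ 2) = Sf ρ q₁ q₂ θ := by
      rw [show (1 : ℝ) - Cf ρ q₁ q₂ θ ^ 2 = Sf ρ q₁ q₂ θ ^ 2 by nlinarith]
      exact Real.sqrt_sq hS.le
    have hkey := SK_cd hl
    have hval : Kf ρ q₁ q₂ θ / Lrs ρ q₁ q₂ θ = -cd ρ q₁ q₂ θ / Sf ρ q₁ q₂ θ := by
      rw [eq_div_iff hS0]; linear_combination hkey
    refine hfin.congr_deriv ?_
    rw [hsqrt, hval]
    field_simp

end Stmt4Aux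

/- STATEMENT 4: on any open interval of headings on which L(θ) > 0 and
θ − φ(θ) ∈ (0, 2π), the RS path length D is twice differentiable with
D″(θ) = d cos(β − φ(θ)) · (d cos(β − φ(θ)) − L(θ)) / L(θ). -/
theorem stmt4 (ρ q₁ q₂ β a b : ℝ) (hρ : 0 < ρ)
    (hd : 2 * ρ ≤ Real.sqrt (q₁ ^ 2 + q₂ ^ 2))
    (hβ₁ : q₁ = Real.sqrt (q₁ ^ 2 + q₂ ^ 2) * Real.cos β)
    (hβ₂ : q₂ = Real.sqrt (q₁ ^ 2 + q₂ ^ 2) * Real.sin β)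
    (hL : ∀ θ ∈ Set.Ioo a b, 0 < Lrs ρ q₁ q₂ θ)
    (hτ : ∀ θ ∈ Set.Ioo a b, θ - φrs ρ q₁ q₂ θ ∈ Set.Ioo 0 (2 * Real.pi)) :
    ∀ θ ∈ Set.Ioo a b,
      DifferentiableAt ℝ (Drs ρ q₁ q₂) θ
      ∧ DifferentiableAt ℝ (deriv (Drs ρ q₁ q₂)) θ
      ∧ deriv (deriv (Drs ρ q₁ q₂)) θ
          = Real.sqrt (q₁ ^ 2 + q₂ ^ 2) * Real.cos (β - φrs ρ q₁ q₂ θ)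
            * (Real.sqrt (q₁ ^ 2 + q₂ ^ 2) * Real.cos (β - φrs ρ q₁ q₂ θ) - Lrs ρ q₁ q₂ θ)
            / Lrs ρ q₁ q₂ θ := by
  intro θ hθ
  have hl := hL θ hθ
  have hDd : ∀ t ∈ Set.Ioo a b, HasDerivAt (Drs ρ q₁ q₂) (Stmt4Aux.Gf ρ q₁ q₂ t) t := by
    intro t ht
    have hlt := hL t ht
    have h1 := Stmt4Aux.hasDerivAt_tau hL hτ ht
    have h2 := Stmt4Aux.hasDerivAt_L hlt
    have hfun : Drs ρ q₁ q₂ = fun t => ρ * (t - φrs ρ q₁ q₂ t) + Lrs ρ q₁ q₂ t := rfl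
    rw [hfun]
    have h := (h1.const_mul ρ).add h2
    refine h.congr_deriv ?_
    rw [Stmt4Aux.Gf, Stmt4Aux.lp]
    field_simp
    ring
  have hmem := isOpen_Ioo.mem_nhds hθ
  have hev : deriv (Drs ρ q₁ q₂) =ᶠ[nhds θ] Stmt4Aux.Gf ρ q₁ q₂ :=
    Filter.eventuallyEq_of_mem hmem fun t ht => (hDd t ht).deriv
  have hG := Stmt4Aux.hasDerivAt_Gf hl
  refine ⟨(hDd θ hθ).differentiableAt, ?_, ?_⟩
  · exact hev.differentiableAt_iff.mpr hG.differentiableAt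
  · rw [hev.deriv_eq, hG.deriv, Stmt4Aux.K_eq hl hβ₁ hβ₂, Stmt4Aux.gd_eq hl]
end
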